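/- Let A be a complex *-algebra that is algebraic and admits a pre-C*-norm. Then A equals the ℂ-linear span of its projections. -/

import Mathlib

open Polynomial

set_option linter.unusedSectionVars false


section Aux

variable {A : Type*} [NonUnitalRing A] [Module ℂ A] [SMulCommClass ℂ A A]
    [IsScalarTower ℂ A A] [StarRing A] [StarModule ℂ A]

lemma star_aeval' {B : Type*} [Ring B] [Algebra ℂ B] [StarRing B] [StarModule ℂ B]
    (x : B) (hx : star x = x) (p : ℂ[X]) :
    star (aeval x p) = aeval x (p.map (starRingEnd ℂ)) := by
  induction p using Polynomial.induction_on' with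
  | add p q hp hq => rw [map_add, star_add, hp, hq, Polynomial.map_add, map_add]
  | monomial n c =>
      rw [aeval_monomial, Polynomial.map_monomial, aeval_monomial, star_mul, star_pow, hx,
        ← algebraMap_star_comm, Algebra.commutes, starRingEnd_apply]

lemma isIntegral_of_algebraic (h : A) (S : NonUnitalSubalgebra ℂ A) (hhS : h ∈ S)
    (hfin : FiniteDimensional ℂ S) :
    IsIntegral ℂ (h : Unitization ℂ A) := by
  set x : Unitization ℂ A := (h : Unitization ℂ A) with hxdef
  -- inr as a linear map
  let ιL : A →ₗ[ℂ] Unitization ℂ A :=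
    { toFun := fun a => (a : Unitization ℂ A)
      map_add' := fun a b => Unitization.inr_add ℂ a b
      map_smul' := fun c a => Unitization.inr_smul ℂ c a }
  let M : Submodule ℂ (Unitization ℂ A) := S.toSubmodule.map ιL
  have hMfin : FiniteDimensional ℂ M := Module.Finite.map _ _
  have key : ∀ k : ℕ, ∃ s : A, s ∈ S ∧ x ^ (k + 1) = (s : Unitization ℂ A) := by
    intro k
    induction k with
    | zero => exact ⟨h, hhS, by rw [pow_one]⟩
    | succ n ih =>
        obtain ⟨s, hs, hxs⟩ := ih
        exact ⟨s * h, S.mul_mem hs hhS, by rw [pow_succ, hxs, Unitization.inr_mul]⟩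
  have hmem : ∀ k : ℕ, x ^ (k + 1) ∈ M := by
    intro k
    obtain ⟨s, hs, hxs⟩ := key k
    exact hxs ▸ Submodule.mem_map_of_mem hs
  set N := Module.finrank ℂ M + 1 with hN
  let w : Fin N → M := fun i => ⟨x ^ (i.1 + 1), hmem i.1⟩
  have hwli : ¬ LinearIndependent ℂ w := by
    intro hli
    have := hli.fintype_card_le_finrank
    simp [hN] at this
  obtain ⟨c, hc, i0, hi0⟩ := Fintype.not_linearIndependent_iff.mp hwli
  have hc' : ∑ i : Fin N, c i • x ^ (i.1 + 1) = 0 := by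
    have := congrArg (M.subtype) hc
    simpa using this
  set q : ℂ[X] := ∑ i : Fin N, C (c i) * X ^ (i.1 + 1) with hq
  have hq0 : q ≠ 0 := by
    intro hqz
    have : q.coeff (i0.1 + 1) = c i0 := by
      rw [hq, finset_sum_coeff]
      rw [Finset.sum_eq_single i0]
      · simp
      · intro j _ hj
        rw [coeff_C_mul, coeff_X_pow, if_neg, mul_zero]
        exact fun hh => hj (Fin.ext (Nat.add_right_cancel hh.symm))
      · simp
    rw [hqz] at this
    simp at this
    exact hi0 this.symm
  have haq : aeval x q = 0 := by
    rw [hq, map_sum]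
    rw [← hc']
    refine Finset.sum_congr rfl fun i _ => ?_
    rw [map_mul, aeval_C, map_pow, aeval_X, Algebra.smul_def]
  exact IsAlgebraic.isIntegral ⟨q, hq0, haq⟩


lemma selfadjoint_mem_span
    (halg : ∀ a : A, ∃ S : NonUnitalSubalgebra ℂ A, a ∈ S ∧ FiniteDimensional ℂ S) (σ : A → ℝ)
    (hσ0 : ∀ a : A, σ a = 0 ↔ a = 0)
    (hσsmul : ∀ (c : ℂ) (a : A), σ (c • a) = ‖c‖ * σ a)
    (hσadd : ∀ a b : A, σ (a + b) ≤ σ a + σ b)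
    (hσmul : ∀ a b : A, σ (a * b) ≤ σ a * σ b)
    (hσstar : ∀ a : A, σ (star a * a) = σ a ^ 2)
    (h : A) (hsa : star h = h) :
    h ∈ Submodule.span ℂ {e : A | star e = e ∧ e * e = e} := by
  classical
  set x : Unitization ℂ A := (h : Unitization ℂ A) with hxdef
  have hxsa : star x = x := by rw [hxdef, ← Unitization.inr_star, hsa]
  -- basic norm facts
  have hσzero : σ 0 = 0 := (hσ0 0).mpr rfl
  have hσnn : ∀ a : A, 0 ≤ σ a := by
    intro a
    have h1 : σ (a + (-1 : ℂ) • a) ≤ σ a + σ ((-1 : ℂ) • a) := hσadd _ _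
    rw [hσsmul] at h1
    rw [neg_one_smul, add_neg_cancel, hσzero] at h1
    simp only [norm_neg, norm_one, one_mul] at h1
    linarith
  -- a*a = 0 → a = 0 for selfadjoint a, and star a * a = 0 → a = 0
  have hproper : ∀ a : A, star a * a = 0 → a = 0 := by
    intro a ha
    have : σ a ^ 2 = 0 := by rw [← hσstar a, ha, hσzero]
    exact (hσ0 a).mp (by nlinarith [hσnn a])
  have hsanil : ∀ a : A, star a = a → a * a = 0 → a = 0 := by
    intro a hs ha
    exact hproper a (by rw [hs, ha])
  -- integrality and minimal polynomial
  obtain ⟨S, hhS, hfin⟩ := halg h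
  have hint : IsIntegral ℂ x := isIntegral_of_algebraic h S hhS hfin
  set m : ℂ[X] := minpoly ℂ x with hm
  have hmonic : m.Monic := minpoly.monic hint
  have hmne : m ≠ 0 := hmonic.ne_zero
  have haem : aeval x m = 0 := minpoly.aeval ℂ x
  have haezero : ∀ p : ℂ[X], m ∣ p → aeval x p = 0 := by
    rintro p ⟨t, rfl⟩
    rw [map_mul, haem, zero_mul]
  -- elements of A from polynomials with zero constant coefficient
  have hfst : ∀ p : ℂ[X], (aeval x p).fst = p.coeff 0 := by
    intro p
    have h1 := Polynomial.aeval_algHom_apply (Unitization.fstHom ℂ A) x p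
    have h2 : (Unitization.fstHom ℂ A) x = 0 := Unitization.fst_inr ℂ h
    rw [h2] at h1
    have h3 : (Unitization.fstHom ℂ A) ((aeval x) p) = p.coeff 0 := by
      rw [← h1, aeval_def, eval₂_at_zero]
      simp
    exact h3
  have hmemA : ∀ p : ℂ[X], p.coeff 0 = 0 →
      (((aeval x p).snd : A) : Unitization ℂ A) = aeval x p := by
    intro p hp
    refine Unitization.ext ?_ rfl
    rw [Unitization.fst_inr, hfst, hp]
  have hm0 : m.coeff 0 = 0 := by
    rw [← hfst m, haem]; rfl
  -- star of elements
  have hstarA : ∀ (p : ℂ[X]) (a : A), (a : Unitization ℂ A) = aeval x p →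
      ((star a : A) : Unitization ℂ A) = aeval x (p.map (starRingEnd ℂ)) := by
    intro p a hap
    rw [Unitization.inr_star, hap, star_aeval' x hxsa]
  -- squarefree
  have hsf : Squarefree m := by
    by_contra hnsf
    rw [Squarefree] at hnsf
    push_neg at hnsf
    obtain ⟨d, hd2, hdu⟩ := hnsf
    obtain ⟨c, hc⟩ := hd2
    have hd0 : d ≠ 0 := by rintro rfl; simp at hc; exact hmne hc
    have hc0 : c ≠ 0 := by rintro rfl; simp at hc; exact hmne hc
    set u : ℂ[X] := d * c with hu
    have hu0 : u ≠ 0 := mul_ne_zero hd0 hc0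
    have hXu : X ∣ u := by
      have hXm : X ∣ m := X_dvd_iff.mpr hm0
      rw [hc] at hXm
      rcases (Polynomial.prime_X (R := ℂ)).2.2 _ _ hXm with hh | hh
      · rcases (Polynomial.prime_X (R := ℂ)).2.2 _ _ hh with hh' | hh'
        · exact Dvd.dvd.mul_right hh' c
        · exact Dvd.dvd.mul_right hh' c
      · exact Dvd.dvd.mul_left hh d
    have hu00 : u.coeff 0 = 0 := X_dvd_iff.mp hXu
    have husq : m ∣ u * u := ⟨c, by rw [hc]; ring⟩
    -- the element n
    set nA : A := (aeval x u).snd with hnA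
    have hnAeq : ((nA : A) : Unitization ℂ A) = aeval x u := hmemA u hu00
    have hstarnA : ((star nA : A) : Unitization ℂ A) = aeval x (u.map (starRingEnd ℂ)) :=
      hstarA u nA hnAeq
    set s : A := star nA * nA with hs
    have hseq : ((s : A) : Unitization ℂ A) = aeval x (u.map (starRingEnd ℂ) * u) := by
      rw [hs, Unitization.inr_mul, hnAeq, hstarnA]
      exact (map_mul (aeval x) _ _).symm
    have hssa : star s = s := by
      apply Unitization.inr_injective (R := ℂ)
      have := hstarA _ s hseq
      rw [this, hseq]
      congr 1
      rw [Polynomial.map_mul]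
      rw [Polynomial.map_map]
      have : (starRingEnd ℂ).comp (starRingEnd ℂ) = RingHom.id ℂ := by
        ext z; simp
      rw [this, Polynomial.map_id, mul_comm]
    have hss0 : s * s = 0 := by
      apply Unitization.inr_injective (R := ℂ)
      rw [Unitization.inr_mul, hseq, ← map_mul, Unitization.inr_zero]
      have heq2 : (u.map (starRingEnd ℂ) * u) * (u.map (starRingEnd ℂ) * u)
          = (u.map (starRingEnd ℂ) * u.map (starRingEnd ℂ) * c) * m := by
        rw [hu, hc]; ring
      rw [heq2, map_mul, haem, mul_zero]
    have hs0 : s = 0 := hsanil s hssa hss0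
    have hnA0 : nA = 0 := hproper nA (hs ▸ hs0)
    have : aeval x u = 0 := by rw [← hnAeq, hnA0, Unitization.inr_zero]
    have hdvdu : m ∣ u := minpoly.dvd ℂ x this
    have hdeg : m.natDegree ≤ u.natDegree := natDegree_le_of_dvd hdvdu hu0
    have hdegm : m.natDegree = 2 * d.natDegree + c.natDegree := by
      rw [hc, natDegree_mul (mul_ne_zero hd0 hd0) hc0, natDegree_mul hd0 hd0]; ring
    have hdegu : u.natDegree = d.natDegree + c.natDegree := natDegree_mul hd0 hc0
    have hd1 : 0 < d.natDegree := by
      by_contra h0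
      push_neg at h0
      have h00 : d.natDegree = 0 := Nat.le_zero.mp h0
      have hdC := eq_C_of_natDegree_eq_zero h00
      apply hdu
      rw [hdC]
      exact isUnit_C.mpr (isUnit_iff_ne_zero.mpr fun hcc => hd0 (by rw [hdC, hcc, map_zero]))
    omega
  -- roots
  have hsep : m.Separable := PerfectField.separable_iff_squarefree.mpr hsf
  have hnodup : m.roots.Nodup := nodup_roots hsep
  set R : Finset ℂ := m.roots.toFinset with hR
  have hRval : R.val = m.roots := Multiset.dedup_eq_self.mpr hnodup
  have hprod : m = ∏ lam ∈ R, (X - C lam) := by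
    have hsplit : m.Splits := IsAlgClosed.splits m
    have h1 := hsplit.eq_prod_roots_of_monic hmonic
    rw [Finset.prod_eq_multiset_prod, hRval]
    exact h1
  have hdegm : m.natDegree = R.card := by
    rw [hprod, natDegree_prod]
    · simp
    · intro i _
      exact X_sub_C_ne_zero i
  have hmevalR : ∀ μ ∈ R, m.eval μ = 0 := by
    intro μ hμ
    rw [hR, Multiset.mem_toFinset, mem_roots'] at hμ
    exact hμ.2
  have h0R : (0 : ℂ) ∈ R := by
    rw [hR, Multiset.mem_toFinset, mem_roots']
    exact ⟨hmne, by rw [IsRoot, ← coeff_zero_eq_eval_zero]; exact hm0⟩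
  have hdvd : ∀ p : ℂ[X], (∀ μ ∈ R, p.eval μ = 0) → m ∣ p := by
    intro p hp
    by_contra hnd
    have hr0 : p %ₘ m ≠ 0 := fun hz => hnd ((modByMonic_eq_zero_iff_dvd hmonic).mp hz)
    have hreval : ∀ μ ∈ R, (p %ₘ m).eval μ = 0 := by
      intro μ hμ
      have hdiv := modByMonic_add_div p m
      have heval := congrArg (Polynomial.eval μ) hdiv
      rw [eval_add, eval_mul, hmevalR μ hμ, zero_mul, add_zero] at heval
      rw [heval]
      exact hp μ hμ
    have hsub : R ⊆ (p %ₘ m).roots.toFinset := fun μ hμ =>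
      Multiset.mem_toFinset.mpr (mem_roots'.mpr ⟨hr0, hreval μ hμ⟩)
    have hcard : R.card ≤ (p %ₘ m).natDegree :=
      le_trans (Finset.card_le_card hsub)
        (le_trans (Multiset.toFinset_card_le _) (card_roots' _))
    have hlt : (p %ₘ m).natDegree < m.natDegree :=
      natDegree_lt_natDegree hr0 (degree_modByMonic_lt p hmonic)
    omega
  have heqR : ∀ p q : ℂ[X], (∀ μ ∈ R, p.eval μ = q.eval μ) → aeval x p = aeval x q := by
    intro p q hpq
    have hd : m ∣ p - q := hdvd _ (by intro μ hμ; rw [eval_sub, hpq μ hμ, sub_self])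
    have h0 := haezero _ hd
    rwa [map_sub, sub_eq_zero] at h0
  -- Lagrange basis polynomials
  have hinj : Set.InjOn (id : ℂ → ℂ) ↑R := Set.injOn_id _
  set g : ℂ → ℂ[X] := fun lam => Lagrange.basis R id lam with hg
  have hgself : ∀ lam ∈ R, (g lam).eval lam = 1 := fun lam hl =>
    Lagrange.eval_basis_self hinj hl
  have hgne : ∀ lam μ : ℂ, lam ≠ μ → μ ∈ R → (g lam).eval μ = 0 := fun lam μ hne hμ =>
    Lagrange.eval_basis_of_ne (v := id) hne hμ
  have hgdeg : ∀ lam ∈ R, (g lam).natDegree = R.card - 1 := fun lam hl =>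
    Lagrange.natDegree_basis hinj hl
  have hg0 : ∀ lam ∈ R.erase 0, (g lam).coeff 0 = 0 := by
    intro lam hl
    rw [coeff_zero_eq_eval_zero]
    exact hgne lam 0 (Finset.ne_of_mem_erase hl) h0R
  have hRcard : 1 ≤ R.card := Finset.card_pos.mpr ⟨0, h0R⟩
  -- small degree implies nonvanishing
  have hsmall : ∀ p : ℂ[X], p ≠ 0 → p.natDegree < m.natDegree → aeval x p ≠ 0 := by
    intro p hp0 hdeg hz
    have hh2 := natDegree_le_of_dvd (minpoly.dvd ℂ x hz) hp0
    rw [← hm] at hh2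
    omega
  -- the projections E lam and the local unit e
  set E : ℂ → A := fun lam => (aeval x (g lam)).snd with hEdef
  have hE : ∀ lam ∈ R.erase 0, ((E lam : A) : Unitization ℂ A) = aeval x (g lam) :=
    fun lam hl => hmemA _ (hg0 lam hl)
  have hEproj : ∀ lam ∈ R.erase 0, E lam * E lam = E lam := by
    intro lam hl
    apply Unitization.inr_injective (R := ℂ)
    rw [Unitization.inr_mul, hE lam hl, ← map_mul]
    apply heqR
    intro μ hμ
    rw [eval_mul]
    by_cases hcase : lam = μ
    · subst hcase; rw [hgself lam (Finset.mem_of_mem_erase hl)]; ring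
    · rw [hgne lam μ hcase hμ]; ring
  have hEne : ∀ lam ∈ R.erase 0, E lam ≠ 0 := by
    intro lam hl hzero
    have h1 : aeval x (g lam) ≠ 0 := by
      apply hsmall _ (Lagrange.basis_ne_zero hinj (Finset.mem_of_mem_erase hl))
      rw [hgdeg lam (Finset.mem_of_mem_erase hl), hdegm]
      omega
    apply h1
    rw [← hE lam hl, hzero, Unitization.inr_zero]
  set G : ℂ[X] := ∑ lam ∈ R.erase 0, g lam with hGdef
  have hGeval : ∀ μ ∈ R.erase 0, G.eval μ = 1 := by
    intro μ hμ
    rw [hGdef, eval_finset_sum]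
    rw [Finset.sum_eq_single μ]
    · exact hgself μ (Finset.mem_of_mem_erase hμ)
    · intro lam hl hne
      exact hgne lam μ hne (Finset.mem_of_mem_erase hμ)
    · intro hnot; exact absurd hμ hnot
  have hGeval0 : G.eval 0 = 0 := by
    rw [hGdef, eval_finset_sum]
    apply Finset.sum_eq_zero
    intro lam hl
    exact hgne lam 0 (Finset.ne_of_mem_erase hl) h0R
  have hG0 : G.coeff 0 = 0 := by rw [coeff_zero_eq_eval_zero]; exact hGeval0
  set e : A := (aeval x G).snd with hedef
  have hEe : ((e : A) : Unitization ℂ A) = aeval x G := hmemA _ hG0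
  -- G acts as a unit modulo m on polynomials with zero constant term
  have hGunit : ∀ p : ℂ[X], p.coeff 0 = 0 → aeval x (G * p) = aeval x p := by
    intro p hp
    apply heqR
    intro μ hμ
    rw [eval_mul]
    by_cases hcase : μ = 0
    · subst hcase
      rw [hGeval0, zero_mul, ← coeff_zero_eq_eval_zero, hp]
    · rw [hGeval μ (Finset.mem_erase.mpr ⟨hcase, hμ⟩), one_mul]
  have heidem : e * e = e := by
    apply Unitization.inr_injective (R := ℂ)
    rw [Unitization.inr_mul, hEe, ← map_mul, hGunit G hG0]
  have hestar : star e = e := by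
    set G' : ℂ[X] := G.map (starRingEnd ℂ) with hG'def
    have hG'0 : G'.coeff 0 = 0 := by rw [hG'def, coeff_map, hG0, map_zero]
    have hf : ((star e : A) : Unitization ℂ A) = aeval x G' := hstarA G e hEe
    have h1 : e * star e = star e := by
      apply Unitization.inr_injective (R := ℂ)
      rw [Unitization.inr_mul, hEe, hf, ← map_mul, hGunit G' hG'0]
    have h2 := congrArg star h1
    rw [star_mul, star_star] at h2
    rw [← h1, h2]
  -- multiplicative bound for point evaluations
  have hbound : ∀ lam ∈ R.erase 0, ∀ (p : ℂ[X]) (a : A),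
      ((a : A) : Unitization ℂ A) = aeval x p → ‖p.eval lam‖ ≤ σ a := by
    intro lam hlam p a hap
    have hlamR : lam ∈ R := Finset.mem_of_mem_erase hlam
    have hkey : a * E lam = (p.eval lam) • E lam := by
      apply Unitization.inr_injective (R := ℂ)
      rw [Unitization.inr_mul, Unitization.inr_smul, hap, hE lam hlam, ← map_mul]
      have h1 : aeval x (p * g lam) = aeval x (C (p.eval lam) * g lam) := by
        apply heqR
        intro μ hμ
        rw [eval_mul, eval_mul, eval_C]
        by_cases hcase : lam = μ
        · subst hcase; rfl
        · rw [hgne lam μ hcase hμ, mul_zero, mul_zero]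
      rw [h1, map_mul, aeval_C, ← Algebra.smul_def]
    have hσE : 0 < σ (E lam) :=
      lt_of_le_of_ne (hσnn _) (Ne.symm (fun hz => hEne lam hlam ((hσ0 _).mp hz)))
    have h2 : ‖p.eval lam‖ * σ (E lam) ≤ σ a * σ (E lam) := by
      rw [← hσsmul, ← hkey]
      exact hσmul a (E lam)
    exact le_of_mul_le_mul_right h2 hσE
  have hhX : ((h : A) : Unitization ℂ A) = aeval x X := (aeval_X (R := ℂ) x).symm
  have hehe : e * h = h * e := by
    apply Unitization.inr_injective (R := ℂ)
    rw [Unitization.inr_mul, Unitization.inr_mul, hEe, hhX, ← map_mul, ← map_mul, mul_comm]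
  -- all nonzero roots are real
  have hreal : ∀ lam ∈ R.erase 0, lam.im = 0 := by
    intro lam hlam
    have hene0 : e ≠ 0 := by
      intro hz
      have hGne : G ≠ 0 := by
        intro hGz
        have h1 := hGeval lam hlam
        rw [hGz] at h1
        simp at h1
      have hGdeg : G.natDegree < m.natDegree := by
        have h1 : G.natDegree ≤ R.card - 1 := by
          rw [hGdef]
          apply Polynomial.natDegree_sum_le_of_forall_le
          intro i hi
          rw [hgdeg i (Finset.mem_of_mem_erase hi)]
        rw [hdegm]
        omega
      exact hsmall G hGne hGdeg (by rw [← hEe, hz, Unitization.inr_zero])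
    have hσe : σ e = 1 := by
      have h1 : σ e ^ 2 = σ e := by rw [← hσstar e, hestar, heidem]
      have h2 : σ e ≠ 0 := fun hz => hene0 ((hσ0 e).mp hz)
      have h3 : σ e * σ e = σ e * 1 := by rw [mul_one, ← pow_two]; exact h1
      exact mul_left_cancel₀ h2 h3
    have hkey : ∀ t : ℝ, lam.re ^ 2 + (lam.im + t) ^ 2 ≤ σ (h * h) + t ^ 2 := by
      intro t
      set c : ℂ := (t : ℂ) * Complex.I with hcdef
      set at_ : A := h + c • e with hatdef
      have hat : ((at_ : A) : Unitization ℂ A) = aeval x (X + C c * G) := by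
        rw [hatdef, Unitization.inr_add, Unitization.inr_smul, hEe, map_add, aeval_X,
          map_mul, aeval_C, ← Algebra.smul_def, ← hxdef]
      have hstarc : star c = -c := by
        rw [hcdef]
        simp [Complex.ext_iff]
      have hstar_at : star at_ = h + (-c) • e := by
        rw [hatdef, star_add, hsa, star_smul, hestar, hstarc]
      have hc2 : -c * c = ((t : ℂ) ^ 2) := by
        rw [hcdef, neg_mul, mul_mul_mul_comm, Complex.I_mul_I]
        ring
      have hgen : ∀ c' c'' : ℂ, (h + c' • e) * (h + c'' • e)
          = h * h + (c'' + c') • (h * e) + (c'' * c') • e := by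
        intro c' c''
        simp only [mul_add, add_mul, smul_mul_assoc, mul_smul_comm, smul_add, smul_smul,
          heidem, hehe, add_smul]
        abel
      have hmulstar : star at_ * at_ = h * h + ((t : ℂ) ^ 2) • e := by
        rw [hstar_at, hatdef, hgen, show c + -c = 0 from add_neg_cancel c,
          show c * -c = ((t : ℂ) ^ 2) from by rw [mul_comm]; exact hc2, zero_smul, add_zero]
      have hupper : σ at_ ^ 2 ≤ σ (h * h) + t ^ 2 := by
        rw [← hσstar at_, hmulstar]
        refine le_trans (hσadd _ _) ?_
        rw [hσsmul]
        have hnt : ‖((t : ℂ))‖ ^ 2 = t ^ 2 := by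
          rw [Complex.norm_real, Real.norm_eq_abs, sq_abs]
        rw [norm_pow, hnt, hσe, mul_one]
      have hlow : ‖lam + (t : ℂ) * Complex.I‖ ≤ σ at_ := by
        have h1 := hbound lam hlam (X + C c * G) at_ hat
        rw [eval_add, eval_X, eval_mul, eval_C, hGeval lam hlam, mul_one, hcdef] at h1
        exact h1
      have hsq : ‖lam + (t : ℂ) * Complex.I‖ ^ 2 ≤ σ at_ ^ 2 :=
        pow_le_pow_left₀ (norm_nonneg _) hlow 2
      have hnormval : ‖lam + (t : ℂ) * Complex.I‖ ^ 2 = lam.re ^ 2 + (lam.im + t) ^ 2 := by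
        rw [Complex.sq_norm, Complex.normSq_apply]
        simp only [Complex.add_re, Complex.add_im, Complex.mul_re, Complex.mul_im,
          Complex.I_re, Complex.I_im, Complex.ofReal_re, Complex.ofReal_im]
        ring
      linarith [hsq, hupper, hnormval.symm.le, hnormval.le]
    by_contra him
    set t0 : ℝ := (σ (h * h) + 1) / (2 * lam.im) with ht0
    have h2t : 2 * lam.im * t0 = σ (h * h) + 1 := by
      rw [ht0]
      field_simp
    have h3 := hkey t0
    nlinarith [sq_nonneg lam.re, sq_nonneg lam.im]
  -- conjugation fixes all elements of R
  have hRconj : ∀ μ ∈ R, (starRingEnd ℂ) μ = μ := by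
    intro μ hμ
    by_cases hcase : μ = 0
    · subst hcase; simp
    · exact Complex.conj_eq_iff_im.mpr (hreal μ (Finset.mem_erase.mpr ⟨hcase, hμ⟩))
  -- the Lagrange basis polynomials have real coefficients
  have hgreal : ∀ lam ∈ R.erase 0, (g lam).map (starRingEnd ℂ) = g lam := by
    intro lam hlam
    have hlamR : lam ∈ R := Finset.mem_of_mem_erase hlam
    show (Lagrange.basis R id lam).map (starRingEnd ℂ) = Lagrange.basis R id lam
    rw [Lagrange.basis, Polynomial.map_prod]
    apply Finset.prod_congr rfl
    intro j hj
    have hjR : j ∈ R := Finset.mem_of_mem_erase hj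
    simp only [Lagrange.basisDivisor, Polynomial.map_mul, Polynomial.map_sub, map_C, map_X,
      map_inv₀, map_sub, id_eq, hRconj lam hlamR, hRconj j hjR]
  have hEstar : ∀ lam ∈ R.erase 0, star (E lam) = E lam := by
    intro lam hlam
    apply Unitization.inr_injective (R := ℂ)
    rw [hstarA (g lam) (E lam) (hE lam hlam), hgreal lam hlam, hE lam hlam]
  -- the spectral decomposition
  have hdecomp : h = ∑ lam ∈ R.erase 0, lam • E lam := by
    apply Unitization.inr_injective (R := ℂ)
    let ιL : A →ₗ[ℂ] Unitization ℂ A :=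
      { toFun := fun a => (a : Unitization ℂ A)
        map_add' := fun a b => Unitization.inr_add ℂ a b
        map_smul' := fun cc a => Unitization.inr_smul ℂ cc a }
    have hsum : ((∑ lam ∈ R.erase 0, lam • E lam : A) : Unitization ℂ A)
        = ∑ lam ∈ R.erase 0, lam • ((E lam : A) : Unitization ℂ A) := by
      rw [show ((∑ lam ∈ R.erase 0, lam • E lam : A) : Unitization ℂ A)
        = ιL (∑ lam ∈ R.erase 0, lam • E lam) from rfl, map_sum]
      apply Finset.sum_congr rfl
      intro lam _
      rw [LinearMap.map_smul]
      rfl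
    rw [hsum, hhX]
    have h1 : ∀ lam ∈ R.erase 0, lam • ((E lam : A) : Unitization ℂ A)
        = aeval x (C lam * g lam) := by
      intro lam hlam
      rw [hE lam hlam, map_mul, aeval_C, ← Algebra.smul_def]
    rw [Finset.sum_congr rfl h1, ← map_sum]
    apply heqR
    intro μ hμ
    rw [eval_finset_sum, eval_X]
    by_cases hcase : μ = 0
    · subst hcase
      apply (Finset.sum_eq_zero ?_).symm
      intro lam hlam
      rw [eval_mul, eval_C, hgne lam 0 (Finset.ne_of_mem_erase hlam) h0R, mul_zero]
    · rw [Finset.sum_eq_single μ]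
      · rw [eval_mul, eval_C, hgself μ hμ, mul_one]
      · intro lam hl hne
        rw [eval_mul, eval_C, hgne lam μ hne hμ, mul_zero]
      · intro hnot
        exact absurd (Finset.mem_erase.mpr ⟨hcase, hμ⟩) hnot
  rw [hdecomp]
  apply Submodule.sum_mem
  intro lam hlam
  exact Submodule.smul_mem _ _
    (Submodule.subset_span ⟨hEstar lam hlam, hEproj lam hlam⟩)

end Aux


/-- A (possibly non-unital) complex algebra is *algebraic* if every element generates a
finite-dimensional subalgebra (equivalently, every element is a root of a nonzero
polynomial with complex coefficients). -/
def IsAlgebraicAlgebra (A : Type*) [NonUnitalRing A] [Module ℂ A] : Prop :=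
  ∀ a : A, ∃ S : NonUnitalSubalgebra ℂ A, a ∈ S ∧ FiniteDimensional ℂ S

/-- A pre-C*-norm on a complex `*`-algebra: a submultiplicative norm `σ` with
`σ (x* x) = σ x ^ 2`. -/
def HasPreCstarNorm (A : Type*) [NonUnitalRing A] [Module ℂ A] [Star A] : Prop :=
  ∃ σ : A → ℝ,
    (∀ a : A, σ a = 0 ↔ a = 0) ∧
    (∀ (c : ℂ) (a : A), σ (c • a) = ‖c‖ * σ a) ∧
    (∀ a b : A, σ (a + b) ≤ σ a + σ b) ∧
    (∀ a b : A, σ (a * b) ≤ σ a * σ b) ∧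
    (∀ a : A, σ (star a * a) = σ a ^ 2)

/-- The involution is proper if `a* a = 0` implies `a = 0`. -/
def HasProperInvolution (A : Type*) [NonUnitalRing A] [Star A] : Prop :=
  ∀ a : A, star a * a = 0 → a = 0

/-- Hermitian: every selfadjoint element has real spectrum (computed in the
unitization `ℂ ⊕ A`). -/
def IsHermitianStarAlgebra (A : Type*) [NonUnitalRing A] [Module ℂ A]
    [SMulCommClass ℂ A A] [IsScalarTower ℂ A A] [Star A] : Prop :=
  ∀ a : A, star a = a → ∀ z ∈ spectrum ℂ (a : Unitization ℂ A), z.im = 0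

/-- Semisimple: the Jacobson radical is `{0}` (expressed via the unitization, whose
Jacobson radical meets `A` exactly in the Jacobson radical of `A`). -/
def IsSemisimpleAlgebra (A : Type*) [NonUnitalRing A] [Module ℂ A]
    [SMulCommClass ℂ A A] [IsScalarTower ℂ A A] : Prop :=
  ∀ a : A, (a : Unitization ℂ A) ∈ (⊥ : Ideal (Unitization ℂ A)).jacobson → a = 0

/-- An algebraic complex `*`-algebra with a pre-C*-norm is the ℂ-linear
span of its projections. -/
theorem span_projections_eq_top_of_algebraic_preCstarNorm (A : Type*) [NonUnitalRing A]
    [Module ℂ A] [SMulCommClass ℂ A A] [IsScalarTower ℂ A A] [StarRing A] [StarModule ℂ A]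
    (halg : IsAlgebraicAlgebra A) (hnorm : HasPreCstarNorm A) :
    Submodule.span ℂ {e : A | star e = e ∧ e * e = e} = ⊤ := by
  obtain ⟨σ, hσ0, hσsmul, hσadd, hσmul, hσstar⟩ := hnorm
  rw [eq_top_iff]
  rintro a -
  have hmem : ∀ b : A, star b = b → b ∈ Submodule.span ℂ {e : A | star e = e ∧ e * e = e} :=
    fun b hb => selfadjoint_mem_span halg σ hσ0 hσsmul hσadd hσmul hσstar b hb
  have h1 : star (((2 : ℂ)⁻¹) • (a + star a)) = ((2 : ℂ)⁻¹) • (a + star a) := by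
    rw [star_smul, star_add, star_star]
    rw [show star ((2 : ℂ)⁻¹) = (2 : ℂ)⁻¹ by simp [Complex.ext_iff]]
    rw [add_comm]
  have h2 : star ((-(Complex.I / 2)) • (a - star a)) = (-(Complex.I / 2)) • (a - star a) := by
    rw [star_smul, star_sub, star_star]
    rw [show star (-(Complex.I / 2)) = Complex.I / 2 by simp [Complex.ext_iff]; norm_num]
    rw [show (a - star a) = -(star a - a) by abel]
    rw [smul_neg, ← neg_smul, neg_neg]
  have hIc : Complex.I • ((-(Complex.I / 2)) • (a - star a))
      = ((2 : ℂ)⁻¹) • (a - star a) := by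
    rw [smul_smul, mul_neg,
      show Complex.I * (Complex.I / 2) = -((2 : ℂ)⁻¹) by
        rw [← mul_div_assoc, Complex.I_mul_I]; norm_num,
      neg_neg]
  have hsplit : a = ((2 : ℂ)⁻¹) • (a + star a)
      + Complex.I • ((-(Complex.I / 2)) • (a - star a)) := by
    rw [hIc, smul_add, smul_sub]
    have hh : (2 : ℂ)⁻¹ • a + (2 : ℂ)⁻¹ • a = a := by
      rw [← add_smul]; norm_num
    calc a = ((2 : ℂ)⁻¹ • a + (2 : ℂ)⁻¹ • a) := hh.symm
    _ = ((2 : ℂ)⁻¹ • a + (2 : ℂ)⁻¹ • star a) + ((2 : ℂ)⁻¹ • a - (2 : ℂ)⁻¹ • star a) := by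
        abel
  rw [hsplit]
  exact Submodule.add_mem _ (hmem _ h1) (Submodule.smul_mem _ _ (hmem _ h2))
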